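/- Let f : M₃(ℝ) → ℂ be continuous with compact support. For 0 < λ < 1 and t > 0 set M(λ,t) = [[√(1−λ²), tλ, 0],[−t⁻¹λ, √(1−λ²), 0],[0,0,1]] and F(±λ) = ∫₀^∞ sign(t−1) · f(M(±λ,t)) dt. Let n(u) = [[1,u,0],[0,1,0],[0,0,1]]. Then lim_{λ→0⁺} λ·F(λ) = ∫₀^∞ f(n(u)) du and lim_{λ→0⁺} λ·F(−λ) = ∫₀^∞ f(n(−u)) du; consequently λ·(F(λ) − F(−λ)) tends to ∫₀^∞ ( f(n(u)) − f(n(−u)) ) du as λ → 0⁺. (This gives the leading singular behavior of the parabolic orbital integral near the identity, underlying the continuity of the stable orbital integral transfer.) -/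

import Mathlib

open Matrix MeasureTheory Filter

noncomputable section

/-- The conjugated rotation-type matrix `M(λ,t)`. -/
def Mmat (l t : ℝ) : Matrix (Fin 3) (Fin 3) ℝ :=
  !![Real.sqrt (1 - l ^ 2), t * l, 0;
     -(t⁻¹ * l), Real.sqrt (1 - l ^ 2), 0;
     0, 0, 1]

/-- The parabolic orbital integral `F(λ) = ∫₀^∞ sign(t-1)·f(M(λ,t)) dt`. -/
def Forb (f : Matrix (Fin 3) (Fin 3) ℝ → ℂ) (l : ℝ) : ℂ :=
  ∫ t in Set.Ioi (0 : ℝ), (Real.sign (t - 1) : ℂ) * f (Mmat l t)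

/-- The unipotent matrix `n(u)`. -/
def nMat (u : ℝ) : Matrix (Fin 3) (Fin 3) ℝ := !![1, u, 0; 0, 1, 0; 0, 0, 1]

/-- Leading singular behavior of the parabolic orbital integral near the identity:
`λ·F(±λ) → ∫₀^∞ f(n(±u)) du` as `λ → 0⁺`, hence
`λ·(F(λ) - F(-λ)) → ∫₀^∞ (f(n(u)) - f(n(-u))) du`. -/
lemma measurable_real_sign : Measurable Real.sign := by
  unfold Real.sign
  exact Measurable.ite (measurableSet_lt measurable_id measurable_const) measurable_const
    (Measurable.ite (measurableSet_lt measurable_const measurable_id) measurable_const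
      measurable_const)

lemma abs_real_sign_le (x : ℝ) : |Real.sign x| ≤ 1 := by
  rcases Real.sign_apply_eq x with h | h | h <;> rw [h] <;> norm_num

lemma meas_f_comp (f : Matrix (Fin 3) (Fin 3) ℝ → ℂ) (hf : Continuous f)
    {m : ℝ → Matrix (Fin 3) (Fin 3) ℝ} (hm : ∀ i j, Measurable fun t => m t i j) :
    Measurable fun t => f (m t) :=
  (show Continuous fun A : Fin 3 → Fin 3 → ℝ => f (Matrix.of A) from hf).measurable.comp
    (measurable_pi_lambda _ fun i => measurable_pi_lambda _ fun j => hm i j)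

lemma measurable_Mmat_entry (a : ℝ) (i j : Fin 3) : Measurable fun t : ℝ => Mmat a t i j := by
  fin_cases i <;> fin_cases j <;>
    simp [Mmat, Matrix.cons_val_zero, Matrix.cons_val_one, Matrix.head_cons] <;>
    fun_prop

lemma exists_entry_bound (f : Matrix (Fin 3) (Fin 3) ℝ → ℂ) (hsupp : HasCompactSupport f) :
    ∃ R : ℝ, ∀ A ∈ tsupport f, |A 0 1| ≤ R := by
  obtain ⟨R, hR⟩ :=
    ((hsupp.image (continuous_id.matrix_elem 0 1)).isBounded).subset_closedBall 0
  exact ⟨R, fun A hA => by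
    simpa [Real.dist_eq] using hR (Set.mem_image_of_mem _ hA)⟩

lemma aux_tendsto (f : Matrix (Fin 3) (Fin 3) ℝ → ℂ) (hf : Continuous f)
    (hsupp : HasCompactSupport f) (s : ℝ) (hs2 : s ^ 2 = 1) (hsab : |s| = 1) :
    Tendsto (fun l : ℝ => (l : ℂ) * Forb f (s * l)) (nhdsWithin 0 (Set.Ioi 0))
      (nhds (∫ u in Set.Ioi (0 : ℝ), f (nMat (s * u)))) := by
  obtain ⟨C, hC⟩ := hsupp.exists_bound_of_continuous hf
  obtain ⟨R, hRA⟩ := exists_entry_bound f hsupp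
  set F : ℝ → ℝ → ℂ := fun l u =>
    (Real.sign (l⁻¹ * u - 1) : ℂ) * f (Mmat (s * l) (l⁻¹ * u)) with hF
  -- change of variables
  have hcv : ∀ l ∈ Set.Ioi (0 : ℝ),
      (∫ u in Set.Ioi (0 : ℝ), F l u) = (l : ℂ) * Forb f (s * l) := by
    intro l hl
    have h := integral_comp_mul_left_Ioi
      (fun t => (Real.sign (t - 1) : ℂ) * f (Mmat (s * l) t)) 0 (inv_pos.2 hl)
    simp only [mul_zero, inv_inv] at h
    rw [hF]
    simp only []
    rw [h, Forb, Complex.real_smul]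
  set bound : ℝ → ℝ := Set.indicator (Set.Icc (0 : ℝ) R) (fun _ => C) with hbdef
  have hboundint : Integrable bound (volume.restrict (Set.Ioi 0)) := by
    refine Integrable.restrict ?_
    rw [hbdef, integrable_indicator_iff measurableSet_Icc]
    exact integrableOn_const measure_Icc_lt_top.ne
  have hmeas : ∀ᶠ l in nhdsWithin (0:ℝ) (Set.Ioi 0),
      AEStronglyMeasurable (F l) (volume.restrict (Set.Ioi 0)) := by
    refine Eventually.of_forall fun l => Measurable.aestronglyMeasurable ?_
    exact ((Complex.measurable_ofReal.comp (measurable_real_sign.comp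
        ((measurable_id.const_mul l⁻¹).sub measurable_const))).mul
      (meas_f_comp f hf fun i j =>
        (measurable_Mmat_entry (s * l) i j).comp (measurable_id.const_mul l⁻¹)))
  have h_bound : ∀ᶠ l in nhdsWithin (0:ℝ) (Set.Ioi 0),
      ∀ᵐ u ∂(volume.restrict (Set.Ioi 0)), ‖F l u‖ ≤ bound u := by
    filter_upwards [self_mem_nhdsWithin] with l hl
    rw [ae_restrict_iff' measurableSet_Ioi]
    refine ae_of_all _ fun u hu => ?_
    have hl0 : (0 : ℝ) < l := hl
    have hu0 : (0 : ℝ) < u := hu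
    have hnorm : ‖F l u‖ = |Real.sign (l⁻¹ * u - 1)| * ‖f (Mmat (s * l) (l⁻¹ * u))‖ := by
      simp [hF, Complex.norm_real, Real.norm_eq_abs]
    by_cases hc : u ≤ R
    · have hb : bound u = C := Set.indicator_of_mem (Set.mem_Icc.mpr ⟨hu0.le, hc⟩) _
      rw [hb, hnorm]
      calc |Real.sign (l⁻¹ * u - 1)| * ‖f (Mmat (s * l) (l⁻¹ * u))‖
          ≤ 1 * ‖f (Mmat (s * l) (l⁻¹ * u))‖ :=
            mul_le_mul_of_nonneg_right (abs_real_sign_le _) (norm_nonneg _)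
        _ = ‖f (Mmat (s * l) (l⁻¹ * u))‖ := one_mul _
        _ ≤ C := hC _
    · have hent : Mmat (s * l) (l⁻¹ * u) 0 1 = s * u := by
        have hl' : l ≠ 0 := hl0.ne'
        simp only [Mmat, Matrix.cons_val_zero, Matrix.cons_val_one, Matrix.head_cons,
          Matrix.of_apply, Matrix.cons_val']
        field_simp
      have hno : Mmat (s * l) (l⁻¹ * u) ∉ tsupport f := by
        intro hmem
        have h1 := hRA _ hmem
        rw [hent, abs_mul, hsab, one_mul, abs_of_pos hu0] at h1
        exact hc h1
      have hf0 : f (Mmat (s * l) (l⁻¹ * u)) = 0 := image_eq_zero_of_notMem_tsupport hno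
      have hb : bound u = 0 := Set.indicator_of_notMem (fun h => hc h.2) _
      rw [hb, hnorm, hf0]
      simp
  have h_lim : ∀ᵐ u ∂(volume.restrict (Set.Ioi (0:ℝ))),
      Tendsto (fun l => F l u) (nhdsWithin 0 (Set.Ioi 0)) (nhds (f (nMat (s * u)))) := by
    rw [ae_restrict_iff' measurableSet_Ioi]
    refine ae_of_all _ fun u hu => ?_
    have hu0 : (0 : ℝ) < u := hu
    have hu' : u ≠ 0 := hu0.ne'
    set M' : ℝ → Matrix (Fin 3) (Fin 3) ℝ := fun l =>
      !![Real.sqrt (1 - l ^ 2), s * u, 0;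
         -(s * l ^ 2 / u), Real.sqrt (1 - l ^ 2), 0;
         0, 0, 1] with hM'
    have hM'c : Continuous M' := by
      refine continuous_matrix fun i j => ?_
      fin_cases i <;> fin_cases j <;>
        simp [hM', Matrix.cons_val_zero, Matrix.cons_val_one, Matrix.head_cons] <;>
        fun_prop
    have hM'0 : M' 0 = nMat (s * u) := by
      ext i j
      fin_cases i <;> fin_cases j <;>
        simp [hM', nMat]
    have htends : Tendsto (fun l => f (M' l)) (nhdsWithin 0 (Set.Ioi 0))
        (nhds (f (nMat (s * u)))) := by
      rw [← hM'0]
      exact (hf.tendsto _).comp ((hM'c.tendsto 0).mono_left nhdsWithin_le_nhds)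
    refine Tendsto.congr' ?_ htends
    filter_upwards [Ioo_mem_nhdsGT_of_mem (Set.left_mem_Ico.2 hu0)] with l hl
    have hl0 : (0 : ℝ) < l := hl.1
    have hl' : l ≠ 0 := hl0.ne'
    have hsign : Real.sign (l⁻¹ * u - 1) = 1 := by
      refine Real.sign_of_pos ?_
      rw [sub_pos, inv_mul_eq_div]
      exact (one_lt_div hl0).2 hl.2
    have e1 : l⁻¹ * u * (s * l) = s * u := by
      have h0 : l⁻¹ * l = 1 := inv_mul_cancel₀ hl'
      calc l⁻¹ * u * (s * l) = s * u * (l⁻¹ * l) := by ring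
        _ = s * u := by rw [h0, mul_one]
    have e2 : -((l⁻¹ * u)⁻¹ * (s * l)) = -(s * l ^ 2 / u) := by
      rw [mul_inv, inv_inv, div_eq_mul_inv]
      ring
    have e3 : 1 - (s * l) ^ 2 = 1 - l ^ 2 := by rw [mul_pow, hs2, one_mul]
    have hM : Mmat (s * l) (l⁻¹ * u) = M' l := by
      rw [Mmat, hM', e1, e2, e3]
    rw [hF]
    simp only []
    rw [hsign, hM, Complex.ofReal_one, one_mul]
  have hmain := tendsto_integral_filter_of_dominated_convergence bound hmeas h_bound
    hboundint h_lim
  refine Tendsto.congr' ?_ hmain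
  filter_upwards [self_mem_nhdsWithin] with l hl
  exact hcv l hl

theorem parabolic_orbital_integral_leading_behavior (f : Matrix (Fin 3) (Fin 3) ℝ → ℂ)
    (hf : Continuous f) (hsupp : HasCompactSupport f) :
    Tendsto (fun l : ℝ => (l : ℂ) * Forb f l) (nhdsWithin 0 (Set.Ioi 0))
      (nhds (∫ u in Set.Ioi (0 : ℝ), f (nMat u))) ∧
    Tendsto (fun l : ℝ => (l : ℂ) * Forb f (-l)) (nhdsWithin 0 (Set.Ioi 0))
      (nhds (∫ u in Set.Ioi (0 : ℝ), f (nMat (-u)))) ∧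
    Tendsto (fun l : ℝ => (l : ℂ) * (Forb f l - Forb f (-l))) (nhdsWithin 0 (Set.Ioi 0))
      (nhds (∫ u in Set.Ioi (0 : ℝ), (f (nMat u) - f (nMat (-u))))) := by
  have h₁ := aux_tendsto f hf hsupp 1 (by norm_num) (by norm_num)
  have h₂ := aux_tendsto f hf hsupp (-1) (by norm_num) (by norm_num)
  simp only [one_mul] at h₁
  simp only [neg_one_mul] at h₂
  obtain ⟨R, hRA⟩ := exists_entry_bound f hsupp
  have hint : ∀ s : ℝ, |s| = 1 →
      IntegrableOn (fun u : ℝ => f (nMat (s * u))) (Set.Ioi 0) := by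
    intro s hsab
    have hcont : Continuous fun u : ℝ => nMat (s * u) := by
      refine continuous_matrix fun i j => ?_
      fin_cases i <;> fin_cases j <;>
        simp [nMat, Matrix.cons_val_zero, Matrix.cons_val_one, Matrix.head_cons] <;>
        fun_prop
    have hcs : HasCompactSupport fun u : ℝ => f (nMat (s * u)) := by
      refine HasCompactSupport.intro (isCompact_Icc (a := -R) (b := R)) fun u hu => ?_
      refine image_eq_zero_of_notMem_tsupport fun hmem => ?_
      have h1 := hRA _ hmem
      have hent : nMat (s * u) 0 1 = s * u := by simp [nMat]
      rw [hent, abs_mul, hsab, one_mul] at h1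
      exact hu ⟨neg_le_of_abs_le h1, le_of_abs_le h1⟩
    exact ((hf.comp hcont).integrable_of_hasCompactSupport hcs).integrableOn
  have hint1 := hint 1 (by norm_num)
  have hint2 := hint (-1) (by norm_num)
  simp only [one_mul] at hint1
  simp only [neg_one_mul] at hint2
  refine ⟨h₁, h₂, ?_⟩
  have h3 := h₁.sub h₂
  rw [← integral_sub hint1 hint2] at h3
  exact h3.congr fun l => (mul_sub _ _ _).symm
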